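/- Let t: Dom(t) ⊆ E → F be a densely defined A-linear operator whose graph is orthogonally complemented in E ⊕ F. Then the domain Dom(t*) of the adjoint equals Ran(P_F P_{G(t)^⊥}), and (Ran(P_F P_{G(t)^⊥}))^⊥ = Ker(P_{G(t)^⊥} P_F*) where P_F* is the inclusion F → E ⊕ F. -/

import Mathlib

/- Framework: Hilbert C*-modules over a C*-algebra `A` (via Mathlib's `CStarModule`),
densely defined operators as `LinearPMap`s, `A`-valued orthogonality, adjoints,
regularity, graphs inside `E ⊕ F`. -/

open scoped InnerProductSpace RightActions WithCStarModule

/-- Mathlib's `CStarModule` as it was in December 2024 (right `A`-action via `SMul Aᵐᵒᵖ E`). -/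
class CStarModuleOld (A E : Type*) [NonUnitalSemiring A] [StarRing A]
    [Module ℂ A] [AddCommGroup E] [Module ℂ E] [PartialOrder A] [SMul Aᵐᵒᵖ E] [Norm A] [Norm E]
    extends Inner A E where
  inner_add_right {x} {y} {z} : inner x (y + z) = inner x y + inner x z
  inner_self_nonneg {x} : 0 ≤ inner x x
  inner_self {x} : inner x x = 0 ↔ x = 0
  inner_op_smul_right {a : A} {x y : E} : inner x (y <• a) = inner x y * a
  inner_smul_right_complex {z : ℂ} {x} {y} : inner x (z • y) = z • inner x y
  star_inner x y : star (inner x y) = inner y x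
  norm_eq_sqrt_norm_inner_self x : ‖x‖ = √‖inner x x‖

/-- The old `A`-valued inner product on the product module: `⟪x.1, y.1⟫ + ⟪x.2, y.2⟫`. -/
instance instInnerProdOld {A E F : Type*} [Add A] [Inner A E] [Inner A F] :
    Inner A (WithCStarModule A (E × F)) where
  inner x y := inner A (WithCStarModule.equiv A (E × F) x).1 (WithCStarModule.equiv A (E × F) y).1 +
    inner A (WithCStarModule.equiv A (E × F) x).2 (WithCStarModule.equiv A (E × F) y).2

namespace RegularOperators

variable (A : Type*) [NonUnitalCStarAlgebra A] [PartialOrder A] [StarOrderedRing A]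

section Defs

variable {E F : Type*}
  [NormedAddCommGroup E] [Module ℂ E] [SMul Aᵐᵒᵖ E] [CStarModuleOld A E]
  [NormedAddCommGroup F] [Module ℂ F] [SMul Aᵐᵒᵖ F] [CStarModuleOld A F]

/-- Orthogonal complement of a subset w.r.t. the `A`-valued inner product. -/
def ortho {E : Type*} [Inner A E] (S : Set E) : Set E := {y | ∀ u ∈ S, ⟪u, y⟫_A = 0}

/-- `S` is orthogonally complemented (an orthogonal summand): every element of `E`
decomposes as a sum of an element of `S` and an element of `S^⊥`. -/
def OrthoComplemented {E : Type*} [AddCommGroup E] [Inner A E] (S : Set E) : Prop := ∀ z : E, ∃ u ∈ S, ∃ v ∈ ortho A S, z = u + v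

/-- A partially defined operator is `A`-linear (for the right `A`-module action). -/
def AModuleMap (t : E →ₗ.[ℂ] F) : Prop :=
  ∀ (a : A) (x : t.domain), ∃ hx : (x : E) <• a ∈ t.domain, t ⟨(x : E) <• a, hx⟩ = (t x) <• a

/-- Kernel of a partially defined operator, as a subset of `E`. -/
def kerSet (t : E →ₗ.[ℂ] F) : Set E := {x | ∃ hx : x ∈ t.domain, t ⟨x, hx⟩ = 0}

/-- Range of a partially defined operator. -/
def ranSet (t : E →ₗ.[ℂ] F) : Set F := {y | ∃ x : t.domain, t x = y}

/-- Domain of the adjoint: those `y` for which some `z` satisfies `⟪tx, y⟫ = ⟪x, z⟫`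
for all `x` in the domain of `t`. -/
def adjDomain (t : E →ₗ.[ℂ] F) : Set F :=
  {y | ∃ z : E, ∀ x : t.domain, ⟪t x, y⟫_A = ⟪(x : E), z⟫_A}

/-- `s` is the adjoint operator `t*` of `t`. -/
structure IsAdjoint (t : E →ₗ.[ℂ] F) (s : F →ₗ.[ℂ] E) : Prop where
  dom : (s.domain : Set F) = adjDomain A t
  inner_eq : ∀ (x : t.domain) (y : s.domain), ⟪t x, (y : F)⟫_A = ⟪(x : E), s y⟫_A

/-- The range of `1 + t*t` (where `s` plays the role of `t*`). -/
def onePlusRange (t : E →ₗ.[ℂ] F) (s : F →ₗ.[ℂ] E) : Set E :=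
  {u | ∃ (x : t.domain) (h : t x ∈ s.domain), (x : E) + s ⟨t x, h⟩ = u}

/-- `t` is a regular operator with adjoint `s`: it is `A`-linear, densely defined,
closed, adjointable with densely defined adjoint, and `1 + t*t` has dense range. -/
structure IsRegular (t : E →ₗ.[ℂ] F) (s : F →ₗ.[ℂ] E) : Prop where
  amod : AModuleMap A t
  denseDom : Dense (t.domain : Set E)
  closedGraph : IsClosed (t.graph : Set (E × F))
  adj : IsAdjoint A t s
  denseAdjDom : Dense (s.domain : Set F)
  denseOnePlusRange : Dense (onePlusRange t s)

/-- The graph of `t` inside the Hilbert `A`-module `E ⊕ F`. -/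
def graphSet (t : E →ₗ.[ℂ] F) : Set (C⋆ᵐᵒᵈ(A, E × F)) :=
  {w | ∃ x : t.domain, WithCStarModule.equiv A (E × F) w = ((x : E), t x)}

/-- The range of `P_F ∘ P_{G(t)^⊥}`, i.e. the image of `G(t)^⊥ ⊆ E ⊕ F` under the
canonical projection onto `F`. -/
def pfRange (t : E →ₗ.[ℂ] F) : Set F :=
  {y | ∃ w ∈ ortho A (graphSet A t), (WithCStarModule.equiv A (E × F) w).2 = y}

end Defs

end RegularOperators

open RegularOperators
variable {A : Type*} [NonUnitalCStarAlgebra A] [PartialOrder A] [StarOrderedRing A]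
variable {E F : Type*}
  [NormedAddCommGroup E] [Module ℂ E] [SMul Aᵐᵒᵖ E] [CStarModuleOld A E] [CompleteSpace E]
  [NormedAddCommGroup F] [Module ℂ F] [SMul Aᵐᵒᵖ F] [CStarModuleOld A F] [CompleteSpace F]

theorem old_inner_prod (x y : C⋆ᵐᵒᵈ(A, E × F)) :
    ⟪x, y⟫_A = ⟪x.1, y.1⟫_A + ⟪x.2, y.2⟫_A := rfl

theorem old_inner_zero_right {G : Type*} [NormedAddCommGroup G] [Module ℂ G] [SMul Aᵐᵒᵖ G]
    [CStarModuleOld A G] (x : G) : ⟪x, (0 : G)⟫_A = 0 := by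
  have h : ⟪x, (0 : G) + 0⟫_A = ⟪x, (0 : G)⟫_A + ⟪x, (0 : G)⟫_A := CStarModuleOld.inner_add_right
  rw [add_zero] at h
  exact (left_eq_add.mp h)

theorem old_inner_neg_right {G : Type*} [NormedAddCommGroup G] [Module ℂ G] [SMul Aᵐᵒᵖ G]
    [CStarModuleOld A G] (x y : G) : ⟪x, -y⟫_A = -⟪x, y⟫_A := by
  have h : ⟪x, -y + y⟫_A = ⟪x, -y⟫_A + ⟪x, y⟫_A := CStarModuleOld.inner_add_right
  rw [neg_add_cancel, old_inner_zero_right] at h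
  exact eq_neg_of_add_eq_zero_left h.symm

theorem old_inner_sub_right {G : Type*} [NormedAddCommGroup G] [Module ℂ G] [SMul Aᵐᵒᵖ G]
    [CStarModuleOld A G] (x y z : G) : ⟪x, y - z⟫_A = ⟪x, y⟫_A - ⟪x, z⟫_A := by
  rw [sub_eq_add_neg, CStarModuleOld.inner_add_right, old_inner_neg_right, ← sub_eq_add_neg]

theorem old_prod_inner_sub_right (x y z : C⋆ᵐᵒᵈ(A, E × F)) :
    ⟪x, y - z⟫_A = ⟪x, y⟫_A - ⟪x, z⟫_A := by
  rw [old_inner_prod, old_inner_prod x y, old_inner_prod x z, WithCStarModule.sub_fst,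
    WithCStarModule.sub_snd, old_inner_sub_right, old_inner_sub_right]
  abel

theorem old_prod_inner_self (w : C⋆ᵐᵒᵈ(A, E × F)) (h : ⟪w, w⟫_A = 0) : w = 0 := by
  rw [old_inner_prod] at h
  obtain ⟨h1, h2⟩ := (add_eq_zero_iff_of_nonneg CStarModuleOld.inner_self_nonneg
    CStarModuleOld.inner_self_nonneg).mp h
  apply (WithCStarModule.equiv A (E × F)).injective
  exact Prod.ext (CStarModuleOld.inner_self.mp h1) (CStarModuleOld.inner_self.mp h2)

/-- if the graph of a densely defined `A`-linear operator `t` is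
orthogonally complemented in `E ⊕ F`, and `P` is the orthogonal projection onto
`G(t)^⊥`, then `Dom(t*) = Ran(P_F P_{G(t)^⊥})` and
`(Ran(P_F P_{G(t)^⊥}))^⊥ = Ker(P_{G(t)^⊥} ∘ P_F*)`, `P_F*` being the inclusion of `F`. -/
theorem adjDomain_eq_pfRange (t : E →ₗ.[ℂ] F)
    (hmod : AModuleMap A t) (hdense : Dense (t.domain : Set E))
    (hgraph : OrthoComplemented A (graphSet A t))
    (P : C⋆ᵐᵒᵈ(A, E × F) → C⋆ᵐᵒᵈ(A, E × F))
    (hP : ∀ w, P w ∈ ortho A (graphSet A t) ∧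
      w - P w ∈ ortho A (ortho A (graphSet A t))) :
    adjDomain A t = pfRange A t ∧
      ortho A (pfRange A t) =
        {y : F | P ((WithCStarModule.equiv A (E × F)).symm (0, y)) = 0} := by
  constructor
  · ext y
    constructor
    · rintro ⟨z, hz⟩
      refine ⟨(WithCStarModule.equiv A (E × F)).symm (-z, y), ?_, by simp⟩
      rintro u ⟨x, hx⟩
      rw [old_inner_prod]
      have h1 : (WithCStarModule.equiv A (E × F) u).1 = u.1 := rfl
      have h2 : (WithCStarModule.equiv A (E × F) u).2 = u.2 := rfl
      have e1 : u.1 = (x : E) := by rw [← h1, hx]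
      have e2 : u.2 = t x := by rw [← h2, hx]
      simp only [e1, e2]
      have : ((WithCStarModule.equiv A (E × F)).symm (-z, y)).1 = -z := rfl
      rw [this]
      have : ((WithCStarModule.equiv A (E × F)).symm (-z, y)).2 = y := rfl
      rw [this]
      rw [old_inner_neg_right, hz x]
      exact neg_add_cancel _
    · rintro ⟨w, hw, hw2⟩
      refine ⟨-(WithCStarModule.equiv A (E × F) w).1, fun x => ?_⟩
      have := hw ((WithCStarModule.equiv A (E × F)).symm ((x : E), t x)) ⟨x, by simp⟩
      rw [old_inner_prod] at this
      have e1 : ((WithCStarModule.equiv A (E × F)).symm ((x : E), t x)).1 = (x : E) := rfl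
      have e2 : ((WithCStarModule.equiv A (E × F)).symm ((x : E), t x)).2 = t x := rfl
      rw [e1, e2] at this
      have hw2' : w.2 = y := hw2
      rw [hw2'] at this
      rw [old_inner_neg_right]
      have h1 : (WithCStarModule.equiv A (E × F) w).1 = w.1 := rfl
      rw [h1]
      exact eq_neg_of_add_eq_zero_right this
  · ext y
    set w₀ := (WithCStarModule.equiv A (E × F)).symm (0, y) with hw₀
    have hw1 : w₀.1 = (0 : E) := rfl
    have hw2 : w₀.2 = y := rfl
    obtain ⟨hPmem, hPperp⟩ := hP w₀
    constructor
    · intro hy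
      -- w₀ ∈ ortho (ortho (graphSet A t))
      have hw₀perp : w₀ ∈ ortho A (ortho A (graphSet A t)) := by
        intro u hu
        rw [old_inner_prod]
        have : ((u : C⋆ᵐᵒᵈ(A, E × F)).2 : F) ∈ pfRange A t :=
          ⟨u, hu, rfl⟩
        rw [hw1, hw2, hy _ this, old_inner_zero_right, add_zero]
      have hPw : P w₀ ∈ ortho A (ortho A (graphSet A t)) := by
        intro u hu
        have h1 := hw₀perp u hu
        have h2 := hPperp u hu
        rw [old_prod_inner_sub_right, h1, zero_sub, neg_eq_zero] at h2
        exact h2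
      have : ⟪P w₀, P w₀⟫_A = 0 := hPw (P w₀) hPmem
      exact old_prod_inner_self _ this
    · intro hy
      intro y' hy'
      obtain ⟨u, hu, hu2⟩ := hy'
      have hw₀mem : w₀ ∈ ortho A (ortho A (graphSet A t)) := by
        have := hPperp
        rw [hy, sub_zero] at this
        exact this
      have := hw₀mem u hu
      rw [old_inner_prod, hw1, hw2] at this
      have e2 : (WithCStarModule.equiv A (E × F) u).2 = u.2 := rfl
      rw [e2] at hu2
      rw [hu2, old_inner_zero_right, zero_add] at this
      exact this
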